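/- Let a > 0 and C ≥ 0, and let y : [0,∞) → ℝ be differentiable with y(τ) > 0 for all τ ≥ 0, satisfying the Bernoulli-type differential inequality y'(τ) + a·y(τ) ≤ C·y(τ)^{3/2} for all τ ≥ 0. If the initial value is small enough that C·√(y(0)) < a, then for all τ ≥ 0, y(τ) ≤ (1 − C·√(y(0))/a)^{−2} · y(0) · e^{−aτ}. (Equivalently, setting z = y^{−1/2}, the inequality −z' + (a/2)z ≤ C/2 together with z(0) > C/a yields the exponential decay y(τ) ≲ e^{−aτ}y(0).) -/

import Mathlib

/-- Bernoulli-type differential inequality: if `y > 0` satisfies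
`y' + a y ≤ C y^{3/2}` on `[0,∞)` with `C √(y 0) < a`, then
`y τ ≤ (1 - C √(y 0)/a)⁻² y 0 e^{-aτ}` for all `τ ≥ 0`. -/
theorem bernoulli_differential_inequality_decay
    (a C : ℝ) (ha : 0 < a) (hC : 0 ≤ C)
    (y y' : ℝ → ℝ)
    (hderiv : ∀ τ : ℝ, 0 ≤ τ → HasDerivAt y (y' τ) τ)
    (hpos : ∀ τ : ℝ, 0 ≤ τ → 0 < y τ)
    (hineq : ∀ τ : ℝ, 0 ≤ τ → y' τ + a * y τ ≤ C * (y τ * Real.sqrt (y τ)))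
    (hsmall : C * Real.sqrt (y 0) < a) :
    ∀ τ : ℝ, 0 ≤ τ →
      y τ ≤ ((1 - C * Real.sqrt (y 0) / a)⁻¹) ^ 2 * y 0 * Real.exp (-a * τ) := by
  intro τ hτ
  set z : ℝ → ℝ := fun t => (Real.sqrt (y t))⁻¹ with hz
  set g : ℝ → ℝ := fun t => Real.exp (-(a/2) * t) * (z t - C / a) with hgdef
  have hs : ∀ t : ℝ, 0 ≤ t → 0 < Real.sqrt (y t) := fun t ht =>
    Real.sqrt_pos.mpr (hpos t ht)
  -- derivative of z
  have hzderiv : ∀ t : ℝ, 0 ≤ t →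
      HasDerivAt z (-(y' t / (2 * Real.sqrt (y t))) / (Real.sqrt (y t))^2) t := by
    intro t ht
    exact ((hderiv t ht).sqrt (hpos t ht).ne').inv (hs t ht).ne'
  -- derivative of g
  have hgderiv : ∀ t : ℝ, 0 ≤ t →
      HasDerivAt g (Real.exp (-(a/2) * t) * (-(a/2)) * (z t - C / a)
        + Real.exp (-(a/2) * t) * (-(y' t / (2 * Real.sqrt (y t))) / (Real.sqrt (y t))^2)) t := by
    intro t ht
    have he : HasDerivAt (fun s : ℝ => Real.exp (-(a/2) * s)) (Real.exp (-(a/2)*t) * (-(a/2))) t := by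
      simpa using ((hasDerivAt_id t).const_mul (-(a/2))).exp
    have := he.mul ((hzderiv t ht).sub_const (C / a))
    exact this
  -- deriv g nonneg on interior
  have hgnn : ∀ t : ℝ, 0 ≤ t →
      0 ≤ Real.exp (-(a/2) * t) * (-(a/2)) * (z t - C / a)
        + Real.exp (-(a/2) * t) * (-(y' t / (2 * Real.sqrt (y t))) / (Real.sqrt (y t))^2) := by
    intro t ht
    have hst := hs t ht
    have hyt := hpos t ht
    have hsq : Real.sqrt (y t) ^ 2 = y t := Real.sq_sqrt hyt.le
    have hi := hineq t ht
    have key : -(a/2) * (z t - C / a)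
        + (-(y' t / (2 * Real.sqrt (y t))) / (Real.sqrt (y t))^2) ≥ 0 := by
      have hz' : z t = (Real.sqrt (y t))⁻¹ := rfl
      rw [hz', hsq]
      rw [ge_iff_le, ← sub_nonneg]
      have h1 : -(y' t / (2 * Real.sqrt (y t))) / y t - 0 -
          -(-(a / 2) * ((Real.sqrt (y t))⁻¹ - C / a))
          = (C * (y t * Real.sqrt (y t)) - (y' t + a * y t)) / (2 * Real.sqrt (y t) * y t) := by
        field_simp
        nlinarith [hsq, hst, hyt]
      have h2 : 0 ≤ (C * (y t * Real.sqrt (y t)) - (y' t + a * y t)) / (2 * Real.sqrt (y t) * y t) :=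
        div_nonneg (by linarith) (by positivity)
      nlinarith [h1, h2]
    have he : 0 < Real.exp (-(a/2) * t) := Real.exp_pos _
    calc (0:ℝ) ≤ Real.exp (-(a/2) * t) * (-(a/2) * (z t - C / a)
        + (-(y' t / (2 * Real.sqrt (y t))) / (Real.sqrt (y t))^2)) :=
          mul_nonneg he.le key
      _ = _ := by ring
  -- g is monotone on Ici 0
  have hmono : MonotoneOn g (Set.Ici (0:ℝ)) := by
    apply monotoneOn_of_deriv_nonneg (convex_Ici 0)
    · intro t ht
      exact ((hgderiv t ht).continuousAt).continuousWithinAt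
    · intro t ht
      rw [interior_Ici] at ht
      exact ((hgderiv t (le_of_lt ht)).differentiableAt).differentiableWithinAt
    · intro t ht
      rw [interior_Ici] at ht
      rw [(hgderiv t (le_of_lt ht)).deriv]
      exact hgnn t (le_of_lt ht)
  have hg0 : g 0 ≤ g τ := hmono (Set.self_mem_Ici) hτ hτ
  -- numbers
  set s0 := Real.sqrt (y 0) with hs0def
  have hs0 : 0 < s0 := hs 0 le_rfl
  set K : ℝ := s0⁻¹ - C / a with hKdef
  have hK : 0 < K := by
    rw [hKdef, sub_pos, div_lt_iff₀ ha]
    nlinarith [mul_lt_mul_of_pos_right hsmall (inv_pos.mpr hs0), mul_inv_cancel₀ hs0.ne']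
  have hg0val : g 0 = K := by simp [hgdef, hz, hKdef, hs0def]
  have hzτ : K * Real.exp ((a/2) * τ) ≤ z τ := by
    have : K ≤ Real.exp (-(a/2) * τ) * (z τ - C / a) := by
      rw [← hg0val]; exact hg0
    have hCa : 0 ≤ C / a := div_nonneg hC ha.le
    have he : 0 < Real.exp (-(a/2) * τ) := Real.exp_pos _
    have h3 : K / Real.exp (-(a/2) * τ) ≤ z τ - C / a := (div_le_iff₀ he).mpr (by linarith [this])
    have h4 : K / Real.exp (-(a/2) * τ) = K * Real.exp ((a/2) * τ) := by
      rw [div_eq_mul_inv, ← Real.exp_neg]; ring_nf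
    linarith [h4 ▸ h3]
  -- conclude
  have hsτ := hs τ hτ
  have hKe : 0 < K * Real.exp ((a/2) * τ) := mul_pos hK (Real.exp_pos _)
  have hsqle : Real.sqrt (y τ) ≤ (K * Real.exp ((a/2) * τ))⁻¹ := by
    have : (Real.sqrt (y τ))⁻¹ ≥ K * Real.exp ((a/2) * τ) := hzτ
    calc Real.sqrt (y τ) = ((Real.sqrt (y τ))⁻¹)⁻¹ := by rw [inv_inv]
      _ ≤ (K * Real.exp ((a/2) * τ))⁻¹ := by
          apply inv_anti₀ hKe this
  have hyτ : y τ ≤ ((K * Real.exp ((a/2) * τ))⁻¹)^2 := by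
    have := Real.sq_sqrt (hpos τ hτ).le
    nlinarith [hsτ, hsqle, inv_pos.mpr hKe]
  have hexp : Real.exp ((a/2) * τ) ^ 2 = Real.exp (a * τ) := by
    rw [← Real.exp_nat_mul]; norm_num; ring_nf
  have hfin : ((K * Real.exp ((a/2) * τ))⁻¹)^2
      = ((1 - C * s0 / a)⁻¹) ^ 2 * y 0 * Real.exp (-a * τ) := by
    have hy0 : s0 ^ 2 = y 0 := Real.sq_sqrt (hpos 0 le_rfl).le
    have hKalt : K = s0⁻¹ * (1 - C * s0 / a) := by
      rw [hKdef]; field_simp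
    have h1 : 0 < 1 - C * s0 / a := by
      rw [sub_pos, div_lt_one ha]; exact hsmall
    rw [hKalt, neg_mul, Real.exp_neg, ← hexp, ← hy0]
    simp only [mul_inv, inv_inv, mul_pow, inv_pow]
    ring
  rw [← hfin]; exact hyτ
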